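/- Let H(x) = Σ_{n≥0} P_n(α,t)·x^{n+1}/(n+1)! be the exponential generating function, as a formal power series over ℚ[α,t], of the descent polynomials P_n(α,t) = Σ_{k=0}^{n} A(n+1,k)·α^k·t^{n-k}. Then (α·exp(tx) − t·exp(αx))·H(x) = exp(αx) − exp(tx), where exp(ax) denotes the formal power series Σ_{n≥0} a^n·x^n/n!. Equivalently, H(x) = (e^{αx} − e^{tx})/(α·e^{tx} − t·e^{αx}). -/

import Mathlib

open Finset MvPolynomial
open scoped Classical

/-- The number of descents of a permutation `σ` of `Fin m`. -/
noncomputable def numDescents (m : ℕ) (σ : Equiv.Perm (Fin m)) : ℕ :=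
  ((Finset.range m).filter fun i =>
    ∃ h : i + 1 < m, σ ⟨i + 1, h⟩ < σ ⟨i, Nat.lt_of_succ_lt h⟩).card

/-- The Eulerian number `A(m,k)`: the number of permutations of `{1,…,m}` with exactly
`k` descents. -/
noncomputable def eulerian (m k : ℕ) : ℕ :=
  ((Finset.univ : Finset (Equiv.Perm (Fin m))).filter fun σ => numDescents m σ = k).card

/-- The h-polynomial of the permutohedron `Pe^n`:
`P_n(α,t) = Σ_{k=0}^{n} A(n+1,k)·α^k·t^{n-k}`. -/
noncomputable def permutoH (n : ℕ) : MvPolynomial (Fin 2) ℚ :=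
  ∑ k ∈ Finset.range (n + 1),
    MvPolynomial.C ((eulerian (n + 1) k : ℚ)) *
      MvPolynomial.X 0 ^ k * MvPolynomial.X 1 ^ (n - k)

/-- The exponential generating function `H(x) = Σ_{n≥0} P_n(α,t)·x^{n+1}/(n+1)!`,
i.e. the coefficient of `x^m` is `P_{m-1}/m!` for `m ≥ 1` and `0` for `m = 0`. -/
noncomputable def permutoEGF : PowerSeries (MvPolynomial (Fin 2) ℚ) :=
  PowerSeries.mk fun m =>
    if m = 0 then 0 else MvPolynomial.C ((m.factorial : ℚ)⁻¹) * permutoH (m - 1)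

/-- The formal power series `exp(a·x) = Σ_{n≥0} aⁿ·xⁿ/n!` with `a ∈ ℚ[α,t]`. -/
noncomputable def expSeries' (a : MvPolynomial (Fin 2) ℚ) :
    PowerSeries (MvPolynomial (Fin 2) ℚ) :=
  PowerSeries.mk fun n => MvPolynomial.C ((n.factorial : ℚ)⁻¹) * a ^ n

section Aux
open List
open scoped PowerSeries

/-- descents of a list -/
def desL : List ℕ → ℕ
  | [] => 0
  | [_] => 0
  | a :: b :: l => (if b < a then 1 else 0) + desL (b :: l)

lemma desL_nil : desL [] = 0 := rfl
lemma desL_single (a : ℕ) : desL [a] = 0 := rfl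
lemma desL_cons₂ (a b : ℕ) (l : List ℕ) :
    desL (a :: b :: l) = (if b < a then 1 else 0) + desL (b :: l) := rfl

lemma desL_cons_le (a : ℕ) (l : List ℕ) : desL (a :: l) ≤ l.length := by
  induction l generalizing a with
  | nil => simp [desL_nil, desL_single]
  | cons b l ih =>
    rw [desL_cons₂]
    have := ih b
    simp only [List.length_cons]
    split <;> omega

lemma desL_le (l : List ℕ) : desL l ≤ l.length - 1 := by
  cases l with
  | nil => simp [desL_nil]
  | cons a l => simpa using desL_cons_le a l

/-- key concat lemma: insert a max element between two lists -/
lemma desL_append_max {N : ℕ} (L R : List ℕ) (hL : ∀ x ∈ L, x < N) (hR : ∀ x ∈ R, x < N) :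
    desL (L ++ N :: R) = desL L + desL R + (if R = [] then 0 else 1) := by
  induction L with
  | nil =>
    cases R with
    | nil => simp [desL_nil, desL_single]
    | cons b R' =>
      simp only [List.nil_append, desL_cons₂, desL_nil]
      have : b < N := hR b (by simp)
      simp [this]
      omega
  | cons x L' ih =>
    cases L' with
    | nil =>
      simp only [List.cons_append, List.nil_append, desL_cons₂]
      have : ¬ N < x := by have := hL x (by simp); omega
      cases R with
      | nil => simp [this, desL_nil, desL_single]
      | cons b R' =>
        have hb : b < N := hR b (by simp)
        simp [this, desL_cons₂, hb, desL_single]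
        omega
    | cons y L'' =>
      have h1 : ∀ x ∈ y :: L'', x < N := fun z hz => hL z (by simp at hz ⊢; tauto)
      have := ih h1
      simp only [List.cons_append] at this ⊢
      rw [desL_cons₂, this, desL_cons₂]
      omega

/-- descent count invariant under order-preserving relabeling of members -/
lemma desL_map (f : ℕ → ℕ) (l : List ℕ) (h : ∀ x ∈ l, ∀ y ∈ l, (f y < f x ↔ y < x)) :
    desL (l.map f) = desL l := by
  induction l with
  | nil => rfl
  | cons a l ih =>
    cases l with
    | nil => rfl
    | cons b l' =>
      have h1 : ∀ x ∈ b :: l', ∀ y ∈ b :: l', (f y < f x ↔ y < x) :=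
        fun x hx y hy => h x (by simp at hx ⊢; tauto) y (by simp at hy ⊢; tauto)
      simp only [List.map_cons] at ih ⊢
      rw [desL_cons₂, desL_cons₂, ih h1]
      have : f b < f a ↔ b < a := h a (by simp) b (by simp)
      simp [this]

lemma desL_eq_sum (l : List ℕ) :
    desL l = ∑ i ∈ Finset.range (l.length - 1),
      if l.getD (i+1) 0 < l.getD i 0 then 1 else 0 := by
  induction l with
  | nil => simp [desL]
  | cons a l ih =>
    cases l with
    | nil => simp [desL]
    | cons b l' =>
      rw [desL_cons₂, ih]
      have hlen : (a :: b :: l').length - 1 = (b :: l').length - 1 + 1 := by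
        simp
      rw [hlen, Finset.sum_range_succ']
      simp only [List.getD_cons_succ, List.getD_cons_zero]
      omega

/-- the list of values of a permutation -/
noncomputable def permList {m : ℕ} (σ : Equiv.Perm (Fin m)) : List ℕ :=
  List.ofFn (fun i => (σ i : ℕ))

lemma numDescents_eq_desL {m : ℕ} (σ : Equiv.Perm (Fin m)) :
    numDescents m σ = desL (permList σ) := by
  rw [numDescents, Finset.card_filter, desL_eq_sum]
  have hlen : (permList σ).length = m := by simp [permList]
  rw [hlen]
  rcases Nat.eq_zero_or_pos m with hm | hm
  · simp [hm]
  · obtain ⟨m', rfl⟩ : ∃ m', m = m' + 1 := ⟨m - 1, by omega⟩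
    rw [Finset.sum_range_succ]
    simp only [Nat.add_sub_cancel]
    have htop : ¬ ∃ h : m' + 1 < m' + 1, σ ⟨m'+1, h⟩ < σ ⟨m', Nat.lt_of_succ_lt h⟩ := by
      rintro ⟨h, -⟩; omega
    rw [if_neg htop, add_zero]
    apply Finset.sum_congr rfl
    intro i hi
    rw [Finset.mem_range] at hi
    have h1 : i + 1 < m' + 1 := by omega
    have h0 : i < m' + 1 := by omega
    have e1 : (permList σ).getD (i+1) 0 = (σ ⟨i+1, h1⟩ : ℕ) := by
      rw [permList, List.getD_eq_getElem _ _ (by simpa using h1), List.getElem_ofFn]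
    have e0 : (permList σ).getD i 0 = (σ ⟨i, h0⟩ : ℕ) := by
      rw [permList, List.getD_eq_getElem _ _ (by simpa using h0), List.getElem_ofFn]
    rw [e1, e0]
    congr 1
    simp only [eq_iff_iff]
    constructor
    · rintro ⟨h, hlt⟩; exact_mod_cast hlt
    · intro hlt; exact ⟨by omega, by exact_mod_cast hlt⟩

noncomputable def permsF (m : ℕ) : Finset (List ℕ) :=
  ⟨((List.range m).permutations : List (List ℕ)), List.nodup_permutations _ (List.nodup_range)⟩

lemma mem_permsF {m : ℕ} {l : List ℕ} : l ∈ permsF m ↔ l ~ List.range m := by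
  exact Multiset.mem_coe.trans List.mem_permutations

lemma permsF_nodup {m : ℕ} {l : List ℕ} (h : l ∈ permsF m) : l.Nodup :=
  ((mem_permsF.mp h).nodup_iff).mpr (List.nodup_range)

lemma permsF_length {m : ℕ} {l : List ℕ} (h : l ∈ permsF m) : l.length = m := by
  rw [(mem_permsF.mp h).length_eq, List.length_range]

lemma permsF_mem_lt {m : ℕ} {l : List ℕ} (h : l ∈ permsF m) {x : ℕ} (hx : x ∈ l) : x < m := by
  have := (mem_permsF.mp h).mem_iff.mp hx
  simpa using this

lemma eulerian_eq_card_lists (m k : ℕ) :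
    eulerian m k = ((permsF m).filter (fun l => desL l = k)).card := by
  rw [eulerian]
  apply Finset.card_bij (fun σ _ => permList σ)
  · intro σ hσ
    rw [Finset.mem_filter] at hσ ⊢
    refine ⟨mem_permsF.mpr ?_, by rw [← numDescents_eq_desL]; exact hσ.2⟩
    apply (List.perm_ext_iff_of_nodup ?_ (List.nodup_range)).mpr
    · intro x
      simp only [permList, List.mem_ofFn, Set.mem_range, List.mem_range]
      constructor
      · rintro ⟨i, rfl⟩; exact (σ i).isLt
      · intro hx; exact ⟨σ.symm ⟨x, hx⟩, by simp⟩
    · exact List.nodup_ofFn.mpr (fun i j hij => σ.injective (Fin.val_injective hij))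
  · intro σ hσ τ hτ h
    apply Equiv.ext; intro i
    have h1 : (permList σ).getD i 0 = (σ i : ℕ) := by
      rw [List.getD_eq_getElem _ _ (by simp [permList, i.isLt])]
      simp [permList]
    have h2 : (permList τ).getD i 0 = (τ i : ℕ) := by
      rw [List.getD_eq_getElem _ _ (by simp [permList, i.isLt])]
      simp [permList]
    rw [h] at h1
    exact Fin.val_injective (h1.symm.trans h2)
  · intro l hl
    rw [Finset.mem_filter] at hl
    have hnd := permsF_nodup hl.1
    have hlen := permsF_length hl.1
    have hmem : ∀ x ∈ l, x < m := fun x hx => permsF_mem_lt hl.1 hx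
    have hgetlt : ∀ i : Fin m, l.get ⟨i, by omega⟩ < m := fun i =>
      hmem _ (List.get_mem _ _)
    set g : Fin m → Fin m := fun i => ⟨l.get ⟨i, by omega⟩, hgetlt i⟩ with hg
    have hinj : Function.Injective g := by
      intro i j hij
      have hval : l.get ⟨i, by omega⟩ = l.get ⟨j, by omega⟩ := by
        simpa [hg, Fin.ext_iff] using hij
      have := List.nodup_iff_injective_get.mp hnd hval
      simpa [Fin.ext_iff] using this
    have hbij : Function.Bijective g := Finite.injective_iff_bijective.mp hinj
    refine ⟨Equiv.ofBijective g hbij, ?_, ?_⟩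
    · rw [Finset.mem_filter]
      refine ⟨Finset.mem_univ _, ?_⟩
      rw [numDescents_eq_desL]
      have : permList (Equiv.ofBijective g hbij) = l := by
        apply List.ext_get (by simp [permList, hlen])
        intro n h1 h2
        simp [permList, List.get_ofFn, Equiv.ofBijective, hg]
      rw [this]; exact hl.2
    · apply List.ext_get (by simp [permList, hlen])
      intro n h1 h2
      simp [permList, List.get_ofFn, Equiv.ofBijective, hg]

lemma idx_decomp {N : ℕ} {l : List ℕ} (h : N ∈ l) :
    l.take (l.idxOf N) ++ N :: l.drop (l.idxOf N + 1) = l ∧ N ∉ l.take (l.idxOf N) := by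
  induction l with
  | nil => simp at h
  | cons a l ih =>
    by_cases ha : N = a
    · subst ha
      simp [List.idxOf_cons_self]
    · have hmem : N ∈ l := by
        rcases List.mem_cons.mp h with h' | h'
        · exact absurd h' ha
        · exact h'
      have hidx : (a :: l).idxOf N = l.idxOf N + 1 := List.idxOf_cons_ne l (Ne.symm ha)
      obtain ⟨ih1, ih2⟩ := ih hmem
      rw [hidx]
      constructor
      · rw [List.take_succ_cons, List.drop_succ_cons, List.cons_append, ih1]
      · rw [List.take_succ_cons, List.mem_cons]
        push_neg
        exact ⟨ha, ih2⟩

lemma range_succ_perm (N : ℕ) : List.range (N+1) ~ N :: List.range N := by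
  rw [List.range_succ]
  exact List.perm_append_singleton _ _

/-- Lemma A: split at max -/
lemma sum_permsF_split {M : Type*} [AddCommMonoid M] (N : ℕ) (f : List ℕ → M) :
    ∑ l ∈ permsF (N+1), f l =
      ∑ p ∈ (permsF N) ×ˢ Finset.range (N+1), f (p.1.take p.2 ++ N :: p.1.drop p.2) := by
  have hji : ∀ l ∈ permsF (N+1),
      (l.take (l.idxOf N) ++ l.drop (l.idxOf N + 1)).take (l.idxOf N) ++
        N :: (l.take (l.idxOf N) ++ l.drop (l.idxOf N + 1)).drop (l.idxOf N) = l := by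
    intro l hl
    have hNl : N ∈ l := (mem_permsF.mp hl).mem_iff.mpr (by simp [List.mem_range])
    obtain ⟨hdec, hnm⟩ := idx_decomp hNl
    have hidxlt : l.idxOf N < l.length := List.idxOf_lt_length_iff.mpr hNl
    have hlen : (l.take (l.idxOf N)).length = l.idxOf N := by
      rw [List.length_take]; omega
    rw [List.take_left' hlen, List.drop_left' hlen, hdec]
  apply Finset.sum_nbij'
    (i := fun l => (l.take (l.idxOf N) ++ l.drop (l.idxOf N + 1), l.idxOf N))
    (j := fun p => p.1.take p.2 ++ N :: p.1.drop p.2)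
  · -- forward membership
    intro l hl
    have hNl : N ∈ l := (mem_permsF.mp hl).mem_iff.mpr (by simp [List.mem_range])
    obtain ⟨hdec, hnm⟩ := idx_decomp hNl
    rw [Finset.mem_product]
    constructor
    · rw [mem_permsF]
      have h1 : l.take (l.idxOf N) ++ N :: l.drop (l.idxOf N + 1) ~
          N :: (l.take (l.idxOf N) ++ l.drop (l.idxOf N + 1)) := List.perm_middle
      rw [hdec] at h1
      have h2 : N :: (l.take (l.idxOf N) ++ l.drop (l.idxOf N + 1)) ~ N :: List.range N :=
        (h1.symm.trans (mem_permsF.mp hl)).trans (range_succ_perm N)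
      exact h2.cons_inv
    · rw [Finset.mem_range]
      have := List.idxOf_lt_length_iff.mpr hNl
      rw [permsF_length hl] at this
      exact this
  · -- backward membership
    rintro ⟨l, i⟩ hp
    rw [Finset.mem_product] at hp
    rw [mem_permsF]
    calc l.take i ++ N :: l.drop i ~ N :: (l.take i ++ l.drop i) := List.perm_middle
      _ = N :: l := by rw [List.take_append_drop]
      _ ~ N :: List.range N := (mem_permsF.mp hp.1).cons N
      _ ~ List.range (N+1) := (range_succ_perm N).symm
  · -- left inverse
    intro l hl
    simp only
    rw [hji l hl]
  · -- right inverse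
    rintro ⟨l, i⟩ hp
    rw [Finset.mem_product, Finset.mem_range] at hp
    have hiN : i ≤ N := by omega
    have hlenl : l.length = N := permsF_length hp.1
    have hNnm : N ∉ l.take i := by
      intro hmem
      have := permsF_mem_lt hp.1 (List.take_subset i l hmem)
      omega
    have hlent : (l.take i).length = i := by rw [List.length_take]; omega
    have hidx : (l.take i ++ N :: l.drop i).idxOf N = i := by
      rw [List.idxOf_append_of_notMem hNnm, List.idxOf_cons_self, hlent, add_zero]
    have h1 : (l.take i ++ N :: l.drop i).take ((l.take i ++ N :: l.drop i).idxOf N) = l.take i := by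
      rw [hidx, List.take_left' hlent]
    have h2 : (l.take i ++ N :: l.drop i).drop ((l.take i ++ N :: l.drop i).idxOf N + 1) = l.drop i := by
      rw [hidx]
      have : l.take i ++ N :: l.drop i = (l.take i ++ [N]) ++ l.drop i := by simp
      rw [this, List.drop_left' (by simp [hlent])]
    rw [Prod.mk.injEq]
    exact ⟨by rw [h1, h2]; exact List.take_append_drop i l, hidx⟩
  · -- summand equality
    intro l hl
    simp only
    rw [hji l hl]

lemma permsF_mem_iff {m : ℕ} {l : List ℕ} (h : l ∈ permsF m) {x : ℕ} : x ∈ l ↔ x < m := by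
  rw [(mem_permsF.mp h).mem_iff, List.mem_range]

noncomputable def permsOf (S : Finset ℕ) : Finset (List ℕ) :=
  ⟨((S.sort (· ≤ ·)).permutations : List (List ℕ)),
    List.nodup_permutations _ (S.sort_nodup (· ≤ ·))⟩

lemma mem_permsOf {S : Finset ℕ} {l : List ℕ} : l ∈ permsOf S ↔ l ~ S.sort (· ≤ ·) := by
  exact Multiset.mem_coe.trans List.mem_permutations

lemma permsOf_range (m : ℕ) : permsOf (Finset.range m) = permsF m := by
  apply Finset.ext
  intro l
  rw [mem_permsOf, mem_permsF, Finset.sort_range]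

lemma permsOf_nodup {S : Finset ℕ} {l : List ℕ} (h : l ∈ permsOf S) : l.Nodup :=
  ((mem_permsOf.mp h).nodup_iff).mpr (S.sort_nodup _)

lemma permsOf_length {S : Finset ℕ} {l : List ℕ} (h : l ∈ permsOf S) : l.length = S.card := by
  rw [(mem_permsOf.mp h).length_eq, Finset.length_sort]

lemma permsOf_mem_iff {S : Finset ℕ} {l : List ℕ} (h : l ∈ permsOf S) {x : ℕ} :
    x ∈ l ↔ x ∈ S := by
  rw [(mem_permsOf.mp h).mem_iff, Finset.mem_sort]

lemma permsOf_toFinset {S : Finset ℕ} {l : List ℕ} (h : l ∈ permsOf S) : l.toFinset = S := by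
  apply Finset.ext
  intro x
  rw [List.mem_toFinset, permsOf_mem_iff h]

/-- for a nodup list, mapping each element to its index gives range -/
lemma map_indexOf_self {u : List ℕ} (h : u.Nodup) :
    u.map (fun x => u.idxOf x) = List.range u.length := by
  apply List.ext_get (by simp)
  intro n h1 h2
  simp only [List.get_eq_getElem, List.getElem_map, List.getElem_range]
  exact List.get_idxOf h ⟨n, by simpa using h1⟩

lemma map_getD_range (u : List ℕ) :
    (List.range u.length).map (fun k => u.getD k 0) = u := by
  apply List.ext_get (by simp)
  intro n h1 h2
  simp only [List.get_eq_getElem, List.getElem_map, List.getElem_range]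
  exact List.getD_eq_getElem u 0 h2

lemma sort_getD_lt {S : Finset ℕ} {k₁ k₂ : ℕ} (h1 : k₁ < k₂) (h2 : k₂ < S.card) :
    (S.sort (· ≤ ·)).getD k₁ 0 < (S.sort (· ≤ ·)).getD k₂ 0 := by
  have hlen : (S.sort (· ≤ ·)).length = S.card := Finset.length_sort _
  have h1' : k₁ < (S.sort (· ≤ ·)).length := by omega
  have h2' : k₂ < (S.sort (· ≤ ·)).length := by omega
  rw [List.getD_eq_getElem _ _ h1', List.getD_eq_getElem _ _ h2']
  exact (S.sortedLT_sort).strictMono_get (show (⟨k₁, h1'⟩ : Fin _) < ⟨k₂, h2'⟩ from h1)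

lemma indexOf_lt_iff {S : Finset ℕ} {x y : ℕ} (hx : x ∈ S) (hy : y ∈ S) :
    (S.sort (· ≤ ·)).idxOf y < (S.sort (· ≤ ·)).idxOf x ↔ y < x := by
  have hnd := S.sort_nodup (· ≤ ·)
  have hx' : x ∈ S.sort (· ≤ ·) := (Finset.mem_sort _).mpr hx
  have hy' : y ∈ S.sort (· ≤ ·) := (Finset.mem_sort _).mpr hy
  have hxl := List.idxOf_lt_length_iff.mpr hx'
  have hyl := List.idxOf_lt_length_iff.mpr hy'
  constructor
  · intro h
    have := sort_getD_lt h (by rwa [← Finset.length_sort (· ≤ ·)])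
    rwa [List.getD_eq_getElem _ _ hyl, List.getD_eq_getElem _ _ hxl,
      List.getElem_idxOf, List.getElem_idxOf] at this
  · intro h
    by_contra hc
    push_neg at hc
    rcases Nat.lt_or_ge ((S.sort (· ≤ ·)).idxOf x) ((S.sort (· ≤ ·)).idxOf y) with h' | h'
    · have := sort_getD_lt h' (by rwa [← Finset.length_sort (· ≤ ·)])
      rw [List.getD_eq_getElem _ _ hxl, List.getD_eq_getElem _ _ hyl,
        List.getElem_idxOf, List.getElem_idxOf] at this
      omega
    · have : (S.sort (· ≤ ·)).idxOf x = (S.sort (· ≤ ·)).idxOf y := by omega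
      have := congrArg (fun n => (S.sort (· ≤ ·)).getD n 0) this
      simp only [List.getD_eq_getElem _ _ hxl, List.getD_eq_getElem _ _ hyl,
        List.getElem_idxOf] at this
      omega

/-- Lemma C: standardization -/
lemma sum_permsOf_eq {M : Type*} [AddCommMonoid M] (S : Finset ℕ) (F : ℕ → M) :
    ∑ L ∈ permsOf S, F (desL L) = ∑ L ∈ permsF S.card, F (desL L) := by
  have hlen : (S.sort (· ≤ ·)).length = S.card := Finset.length_sort _
  apply Finset.sum_nbij' (i := fun L => L.map (fun x => (S.sort (· ≤ ·)).idxOf x))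
    (j := fun l => l.map (fun k => (S.sort (· ≤ ·)).getD k 0))
  · intro L hL
    rw [mem_permsF]
    have h1 : L.map (fun x => (S.sort (· ≤ ·)).idxOf x) ~
        (S.sort (· ≤ ·)).map (fun x => (S.sort (· ≤ ·)).idxOf x) :=
      (mem_permsOf.mp hL).map _
    rwa [map_indexOf_self (S.sort_nodup _), hlen] at h1
  · intro l hl
    rw [mem_permsOf]
    have h1 : l.map (fun k => (S.sort (· ≤ ·)).getD k 0) ~
        (List.range S.card).map (fun k => (S.sort (· ≤ ·)).getD k 0) :=
      (mem_permsF.mp hl).map _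
    rwa [← hlen, map_getD_range] at h1
  · intro L hL
    rw [List.map_map]
    have : ∀ x ∈ L, ((fun k => (S.sort (· ≤ ·)).getD k 0) ∘ fun x => (S.sort (· ≤ ·)).idxOf x) x
        = id x := by
      intro x hx
      have hx' : x ∈ S.sort (· ≤ ·) := (Finset.mem_sort _).mpr ((permsOf_mem_iff hL).mp hx)
      have hxl := List.idxOf_lt_length_iff.mpr hx'
      simp only [Function.comp_apply, id_eq, List.getD_eq_getElem _ _ hxl, List.getElem_idxOf]
    rw [List.map_congr_left this, List.map_id]
  · intro l hl
    rw [List.map_map]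
    have : ∀ k ∈ l, ((fun x => (S.sort (· ≤ ·)).idxOf x) ∘ fun k => (S.sort (· ≤ ·)).getD k 0) k
        = id k := by
      intro k hk
      have hk' : k < (S.sort (· ≤ ·)).length := by
        rw [hlen]
        have := (mem_permsF.mp hl).mem_iff.mp hk
        simpa using this
      simp only [Function.comp_apply, id_eq, List.getD_eq_getElem _ _ hk']
      exact List.get_idxOf (S.sort_nodup _) ⟨k, hk'⟩
    rw [List.map_congr_left this, List.map_id]
  · intro L hL
    congr 1
    rw [desL_map]
    intro x hx y hy
    exact indexOf_lt_iff ((permsOf_mem_iff hL).mp hx) ((permsOf_mem_iff hL).mp hy)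

/-- Lemma B: second splitting -/
lemma sum_permsF_subsets {M : Type*} [AddCommMonoid M] (N i : ℕ) (hi : i ≤ N)
    (g : List ℕ → List ℕ → M) :
    ∑ l ∈ permsF N, g (l.take i) (l.drop i) =
      ∑ S ∈ Finset.powersetCard i (Finset.range N),
        ∑ L ∈ permsOf S, ∑ R ∈ permsOf (Finset.range N \ S), g L R := by
  have hrhs : (∑ S ∈ Finset.powersetCard i (Finset.range N),
        ∑ L ∈ permsOf S, ∑ R ∈ permsOf (Finset.range N \ S), g L R)
      = ∑ q ∈ (Finset.powersetCard i (Finset.range N)).sigma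
          (fun S => permsOf S ×ˢ permsOf (Finset.range N \ S)), g q.2.1 q.2.2 := by
    rw [Finset.sum_sigma]
    exact Finset.sum_congr rfl (fun S _ => (Finset.sum_product _ _ (fun p => g p.1 p.2)).symm)
  rw [hrhs]
  · apply Finset.sum_nbij' (i := fun l => ⟨(l.take i).toFinset, (l.take i, l.drop i)⟩)
      (j := fun q => q.2.1 ++ q.2.2)
    · -- forward membership
      intro l hl
      have hnd := permsF_nodup hl
      have hlen := permsF_length hl
      have htnd : (l.take i).Nodup := hnd.sublist (List.take_sublist i l)
      have hdnd : (l.drop i).Nodup := hnd.sublist (List.drop_sublist i l)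
      have hdisj : (l.take i).Disjoint (l.drop i) := by
        have := hnd
        rw [← List.take_append_drop i l, List.nodup_append] at this
        exact fun a ha hb => this.2.2 a ha a hb rfl
      rw [Finset.mem_sigma]
      constructor
      · rw [Finset.mem_powersetCard]
        constructor
        · intro x hx
          rw [List.mem_toFinset] at hx
          exact Finset.mem_range.mpr ((permsF_mem_iff hl).mp (List.take_subset i l hx))
        · rw [List.toFinset_card_of_nodup htnd, List.length_take]
          omega
      · rw [Finset.mem_product]
        constructor
        · rw [mem_permsOf]
          rw [List.perm_ext_iff_of_nodup htnd (Finset.sort_nodup _ _)]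
          intro x
          rw [Finset.mem_sort, List.mem_toFinset]
        · rw [mem_permsOf]
          rw [List.perm_ext_iff_of_nodup hdnd (Finset.sort_nodup _ _)]
          intro x
          rw [Finset.mem_sort, Finset.mem_sdiff, Finset.mem_range, List.mem_toFinset]
          constructor
          · intro hx
            refine ⟨(permsF_mem_iff hl).mp (List.drop_subset i l hx), fun hc => hdisj hc hx⟩
          · rintro ⟨hx, hnx⟩
            have : x ∈ l := (permsF_mem_iff hl).mpr hx
            rw [← List.take_append_drop i l, List.mem_append] at this
            tauto
    · -- backward membership
      rintro ⟨S, L, R⟩ hq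
      rw [Finset.mem_sigma, Finset.mem_powersetCard, Finset.mem_product] at hq
      obtain ⟨⟨hSsub, hScard⟩, hL, hR⟩ := hq
      rw [mem_permsF]
      rw [List.perm_ext_iff_of_nodup ?_ (List.nodup_range)]
      · intro x
        rw [List.mem_append, List.mem_range, permsOf_mem_iff hL, permsOf_mem_iff hR,
          Finset.mem_sdiff, Finset.mem_range]
        constructor
        · rintro (hx | hx)
          · exact Finset.mem_range.mp (hSsub hx)
          · exact hx.1
        · intro hx
          by_cases hxS : x ∈ S
          · exact Or.inl hxS
          · exact Or.inr ⟨hx, hxS⟩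
      · rw [List.nodup_append]
        refine ⟨permsOf_nodup hL, permsOf_nodup hR, ?_⟩
        intro x hxL y hxR hxy
        rw [← hxy] at hxR
        have h1 := (permsOf_mem_iff hL).mp hxL
        have h2 := (permsOf_mem_iff hR).mp hxR
        rw [Finset.mem_sdiff] at h2
        exact h2.2 h1
    · -- left inverse
      intro l hl
      simp only [List.take_append_drop]
    · -- right inverse
      rintro ⟨S, L, R⟩ hq
      rw [Finset.mem_sigma, Finset.mem_powersetCard, Finset.mem_product] at hq
      obtain ⟨⟨hSsub, hScard⟩, hL, hR⟩ := hq
      have hLlen : L.length = i := by rw [permsOf_length hL, hScard]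
      have ht : (L ++ R).take i = L := List.take_left' hLlen
      have hd : (L ++ R).drop i = R := List.drop_left' hLlen
      simp only [ht, hd]
      congr 1
      exact permsOf_toFinset hL
    · -- summands
      intro l hl
      rfl

lemma permutoH_eq (n : ℕ) :
    permutoH n = ∑ l ∈ permsF (n+1), X 0 ^ desL l * X (1 : Fin 2) ^ (n - desL l) := by
  rw [permutoH]
  rw [← Finset.sum_fiberwise_of_maps_to (g := desL) (t := Finset.range (n+1))
    (fun l hl => Finset.mem_range.mpr (by have := desL_le l; rw [permsF_length hl] at this; omega))]
  apply Finset.sum_congr rfl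
  intro k hk
  rw [eulerian_eq_card_lists]
  push_cast
  rw [MvPolynomial.C_eq_coe_nat]
  rw [Finset.card_eq_sum_ones]
  push_cast
  rw [Finset.sum_mul, Finset.sum_mul]
  apply Finset.sum_congr rfl
  intro l hl
  rw [Finset.mem_filter] at hl
  rw [hl.2, one_mul]

theorem permutoH_rec (M : ℕ) :
    permutoH (M+1) = (X 0 + X 1) * permutoH M +
      X 0 * X 1 * ∑ j ∈ Finset.range M,
        ((M+1).choose (j+1)) • (permutoH j * permutoH (M-1-j)) := by
  rw [permutoH_eq (M+1),
    sum_permsF_split (M+1) (fun l => (X (0:Fin 2) : MvPolynomial (Fin 2) ℚ) ^ desL l * X (1 : Fin 2) ^ (M+1 - desL l)),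
    Finset.sum_product]
  -- now : ∑ l' ∈ permsF (M+1), ∑ i ∈ range (M+2), w(l', i)
  have key : ∀ l' ∈ permsF (M+1), ∀ i ∈ Finset.range (M+2),
      ((X (0:Fin 2) : MvPolynomial (Fin 2) ℚ) ^ desL (l'.take i ++ (M+1) :: l'.drop i) *
        X (1:Fin 2) ^ (M+1 - desL (l'.take i ++ (M+1) :: l'.drop i)))
      = (X (0:Fin 2) : MvPolynomial (Fin 2) ℚ) ^ (desL (l'.take i) + desL (l'.drop i) + if l'.drop i = [] then 0 else 1) *
        X (1:Fin 2) ^ (M+1 - (desL (l'.take i) + desL (l'.drop i) + if l'.drop i = [] then 0 else 1)) := by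
    intro l' hl' i hi
    rw [desL_append_max _ _
      (fun x hx => (permsF_mem_iff hl').mp (List.take_subset i l' hx))
      (fun x hx => (permsF_mem_iff hl').mp (List.drop_subset i l' hx))]
  rw [Finset.sum_congr rfl (fun l' hl' => Finset.sum_congr rfl (fun i hi => key l' hl' i hi))]
  rw [Finset.sum_comm]
  -- peel i = M+1 and i = 0
  rw [Finset.sum_range_succ, Finset.sum_range_succ']
  -- evaluate the i = 0 term
  have h0 : ∀ l' ∈ permsF (M+1),
      ((X (0:Fin 2) : MvPolynomial (Fin 2) ℚ) ^ (desL (l'.take 0) + desL (l'.drop 0) + if l'.drop 0 = [] then 0 else 1) *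
        X (1:Fin 2) ^ (M+1 - (desL (l'.take 0) + desL (l'.drop 0) + if l'.drop 0 = [] then 0 else 1)))
      = (X (0:Fin 2) : MvPolynomial (Fin 2) ℚ) * ((X (0:Fin 2) : MvPolynomial (Fin 2) ℚ) ^ desL l' * X (1:Fin 2) ^ (M - desL l')) := by
    intro l' hl'
    have hne : l' ≠ [] := by
      intro hc
      have := permsF_length hl'
      rw [hc] at this
      simp at this
    have hd : desL l' ≤ M := by have := desL_le l'; rw [permsF_length hl'] at this; omega
    rw [List.take_zero, List.drop_zero, desL_nil, if_neg hne]
    rw [show (0 + desL l' + 1) = desL l' + 1 by omega]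
    rw [show M + 1 - (desL l' + 1) = M - desL l' by omega, pow_succ]
    ring
  -- evaluate the i = M+1 term
  have hM : ∀ l' ∈ permsF (M+1),
      ((X (0:Fin 2) : MvPolynomial (Fin 2) ℚ) ^ (desL (l'.take (M+1)) + desL (l'.drop (M+1)) + if l'.drop (M+1) = [] then 0 else 1) *
        X (1:Fin 2) ^ (M+1 - (desL (l'.take (M+1)) + desL (l'.drop (M+1)) + if l'.drop (M+1) = [] then 0 else 1)))
      = (X (1:Fin 2) : MvPolynomial (Fin 2) ℚ) * ((X (0:Fin 2) : MvPolynomial (Fin 2) ℚ) ^ desL l' * X (1:Fin 2) ^ (M - desL l')) := by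
    intro l' hl'
    have hlen := permsF_length hl'
    have htake : l'.take (M+1) = l' := List.take_of_length_le (by omega)
    have hdrop : l'.drop (M+1) = [] := List.drop_eq_nil_of_le (by omega)
    have hd : desL l' ≤ M := by have := desL_le l'; omega
    rw [htake, hdrop, desL_nil, if_pos rfl]
    rw [show (desL l' + 0 + 0) = desL l' by omega]
    rw [show M + 1 - desL l' = (M - desL l') + 1 by omega, pow_succ]
    ring
  rw [Finset.sum_congr rfl h0, Finset.sum_congr rfl hM]
  rw [← Finset.mul_sum, ← Finset.mul_sum, ← permutoH_eq M]
  -- middle terms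
  have hmid : ∀ j ∈ Finset.range M,
      (∑ l' ∈ permsF (M+1),
        (X (0:Fin 2) : MvPolynomial (Fin 2) ℚ) ^ (desL (l'.take (j+1)) + desL (l'.drop (j+1)) + if l'.drop (j+1) = [] then 0 else 1) *
        X (1:Fin 2) ^ (M+1 - (desL (l'.take (j+1)) + desL (l'.drop (j+1)) + if l'.drop (j+1) = [] then 0 else 1)))
      = (X (0:Fin 2) : MvPolynomial (Fin 2) ℚ) * X 1 * (((M+1).choose (j+1)) • (permutoH j * permutoH (M-1-j))) := by
    intro j hj
    rw [Finset.mem_range] at hj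
    -- rewrite each summand as a product
    have step1 : ∀ l' ∈ permsF (M+1),
        ((X (0:Fin 2) : MvPolynomial (Fin 2) ℚ) ^ (desL (l'.take (j+1)) + desL (l'.drop (j+1)) + if l'.drop (j+1) = [] then 0 else 1) *
          X (1:Fin 2) ^ (M+1 - (desL (l'.take (j+1)) + desL (l'.drop (j+1)) + if l'.drop (j+1) = [] then 0 else 1)))
        = (X (0:Fin 2) : MvPolynomial (Fin 2) ℚ) * X 1 * (((X (0:Fin 2) : MvPolynomial (Fin 2) ℚ) ^ desL (l'.take (j+1)) * X (1:Fin 2) ^ (j - desL (l'.take (j+1)))) *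
            ((X (0:Fin 2) : MvPolynomial (Fin 2) ℚ) ^ desL (l'.drop (j+1)) * X (1:Fin 2) ^ (M-1-j - desL (l'.drop (j+1))))) := by
      intro l' hl'
      have hlen := permsF_length hl'
      have hlt : (l'.take (j+1)).length = j+1 := by rw [List.length_take]; omega
      have hld : (l'.drop (j+1)).length = M - j := by rw [List.length_drop]; omega
      have hne : l'.drop (j+1) ≠ [] := by
        intro hc; rw [hc] at hld; simp at hld; omega
      have hdL : desL (l'.take (j+1)) ≤ j := by have := desL_le (l'.take (j+1)); omega
      have hdR : desL (l'.drop (j+1)) ≤ M-1-j := by have := desL_le (l'.drop (j+1)); omega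
      rw [if_neg hne]
      set dL := desL (l'.take (j+1))
      set dR := desL (l'.drop (j+1))
      rw [show dL + dR + 1 = (dL + dR) + 1 from rfl]
      rw [show M + 1 - (dL + dR + 1) = (j - dL) + ((M-1-j) - dR) + 1 by omega]
      rw [pow_add, pow_add, pow_add, pow_succ, pow_one]
      ring
    rw [Finset.sum_congr rfl step1, ← Finset.mul_sum]
    congr 1
    -- now use the subset splitting
    rw [sum_permsF_subsets (M+1) (j+1) (by omega)
      (fun L R => ((X (0:Fin 2) : MvPolynomial (Fin 2) ℚ) ^ desL L * X (1:Fin 2) ^ (j - desL L)) *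
        ((X (0:Fin 2) : MvPolynomial (Fin 2) ℚ) ^ desL R * X (1:Fin 2) ^ (M-1-j - desL R)))]
    have inner : ∀ S ∈ Finset.powersetCard (j+1) (Finset.range (M+1)),
        (∑ L ∈ permsOf S, ∑ R ∈ permsOf (Finset.range (M+1) \ S),
          ((X (0:Fin 2) : MvPolynomial (Fin 2) ℚ) ^ desL L * X (1:Fin 2) ^ (j - desL L)) *
          ((X (0:Fin 2) : MvPolynomial (Fin 2) ℚ) ^ desL R * X (1:Fin 2) ^ (M-1-j - desL R)))
        = permutoH j * permutoH (M-1-j) := by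
      intro S hS
      rw [Finset.mem_powersetCard] at hS
      have hcard : S.card = j + 1 := hS.2
      have hcard2 : (Finset.range (M+1) \ S).card = M - j := by
        rw [Finset.card_sdiff_of_subset hS.1, Finset.card_range, hcard]
        omega
      rw [← Finset.sum_mul_sum]
      congr 1
      · rw [sum_permsOf_eq S (fun k => (X (0:Fin 2) : MvPolynomial (Fin 2) ℚ) ^ k * X (1:Fin 2) ^ (j - k)), hcard,
          permutoH_eq j]
      · rw [sum_permsOf_eq _ (fun k => (X (0:Fin 2) : MvPolynomial (Fin 2) ℚ) ^ k * X (1:Fin 2) ^ (M-1-j - k)), hcard2,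
          show M - j = M-1-j+1 by omega, permutoH_eq (M-1-j)]
    rw [Finset.sum_congr rfl inner, Finset.sum_const, Finset.card_powersetCard,
      Finset.card_range]
  rw [Finset.sum_congr rfl hmid, ← Finset.mul_sum]
  ring

abbrev R2 := MvPolynomial (Fin 2) ℚ

lemma permsF_one : permsF 1 = {[0]} := by
  apply Finset.ext
  intro l
  rw [mem_permsF, (by decide : List.range 1 = [0]), List.perm_singleton, Finset.mem_singleton]

lemma desL_zero_list : desL [0] = 0 := rfl

lemma permutoH_zero : permutoH 0 = 1 := by
  rw [permutoH_eq 0, zero_add, permsF_one, Finset.sum_singleton, desL_zero_list]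
  simp

lemma coeff_expSeries'_zero (p : MvPolynomial (Fin 2) ℚ) :
    PowerSeries.coeff (R := R2) 0 (expSeries' p) = 1 := by
  rw [expSeries', PowerSeries.coeff_mk]
  simp [Nat.factorial]


lemma fact_cast_succ (n : ℕ) :
    (((n+1).factorial : ℚ))⁻¹ * ((n:ℚ)+1) = ((n.factorial : ℚ))⁻¹ := by
  rw [Nat.factorial_succ]
  push_cast
  have h1 : ((n:ℚ)+1) ≠ 0 := by positivity
  have h2 : ((n.factorial : ℚ)) ≠ 0 := by
    exact_mod_cast Nat.factorial_ne_zero n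
  field_simp

lemma choose_fact_id (m k : ℕ) (hk : k < m) :
    (((m+1).factorial:ℚ))⁻¹ * (((m+1).choose (k+1) : ℕ) : ℚ) =
      (((k+1).factorial:ℚ))⁻¹ * (((m-k).factorial:ℚ))⁻¹ := by
  have h := Nat.choose_mul_factorial_mul_factorial (show k+1 ≤ m+1 by omega)
  rw [show m+1-(k+1) = m-k by omega] at h
  have hq : (((m+1).choose (k+1) : ℕ) : ℚ) * ((k+1).factorial : ℚ) * ((m-k).factorial : ℚ)
      = ((m+1).factorial : ℚ) := by exact_mod_cast congrArg (fun x : ℕ => (x : ℚ)) h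
  have h1 : ((k+1).factorial : ℚ) ≠ 0 := by exact_mod_cast Nat.factorial_ne_zero (k+1)
  have h2 : ((m-k).factorial : ℚ) ≠ 0 := by exact_mod_cast Nat.factorial_ne_zero (m-k)
  have h3 : ((m+1).factorial : ℚ) ≠ 0 := by exact_mod_cast Nat.factorial_ne_zero (m+1)
  field_simp
  linarith [hq]

lemma cast_succ_C (n : ℕ) : ((n : R2)+1) = MvPolynomial.C ((n:ℚ)+1) := by
  rw [map_add, map_one, MvPolynomial.C_eq_coe_nat]

lemma derivative_expSeries' (p : R2) :
    d⁄dX R2 (expSeries' p) = PowerSeries.C (R := R2) p * expSeries' p := by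
  apply PowerSeries.ext
  intro n
  rw [PowerSeries.coeff_derivative, PowerSeries.coeff_C_mul, expSeries',
    PowerSeries.coeff_mk, PowerSeries.coeff_mk]
  rw [cast_succ_C]
  rw [mul_assoc, mul_comm (p ^ (n+1)), ← mul_assoc, ← map_mul, fact_cast_succ, pow_succ]
  ring

lemma coeff_permutoEGF_zero : PowerSeries.coeff (R := R2) 0 permutoEGF = 0 := by
  rw [permutoEGF, PowerSeries.coeff_mk, if_pos rfl]

lemma coeff_permutoEGF_succ (n : ℕ) :
    PowerSeries.coeff (R := R2) (n+1) permutoEGF =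
      MvPolynomial.C (((n+1).factorial : ℚ)⁻¹) * permutoH n := by
  rw [permutoEGF, PowerSeries.coeff_mk, if_neg (Nat.succ_ne_zero n)]
  rfl

lemma derivative_permutoEGF :
    d⁄dX R2 permutoEGF = 1 + PowerSeries.C (R := R2) (MvPolynomial.X 0 + MvPolynomial.X 1) * permutoEGF +
      PowerSeries.C (R := R2) (MvPolynomial.X 0 * MvPolynomial.X 1) * (permutoEGF * permutoEGF) := by
  apply PowerSeries.ext
  intro n
  rw [PowerSeries.coeff_derivative, coeff_permutoEGF_succ, map_add, map_add,
    PowerSeries.coeff_C_mul, PowerSeries.coeff_C_mul, PowerSeries.coeff_mul]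
  cases n with
  | zero =>
    rw [coeff_permutoEGF_zero, permutoH_zero]
    simp [Finset.Nat.antidiagonal_zero, coeff_permutoEGF_zero, PowerSeries.coeff_one,
      Nat.factorial]
  | succ m =>
    rw [PowerSeries.coeff_one, if_neg (Nat.succ_ne_zero m), coeff_permutoEGF_succ m]
    have hL : MvPolynomial.C (((m+1+1).factorial : ℚ)⁻¹) * permutoH (m+1) * ((↑(m+1) : R2)+1)
        = MvPolynomial.C (((m+1).factorial : ℚ)⁻¹) * permutoH (m+1) := by
      rw [cast_succ_C, mul_assoc, mul_comm (permutoH (m+1)), ← mul_assoc, ← map_mul,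
        fact_cast_succ (m+1)]
    rw [hL, permutoH_rec m]
    rw [Finset.Nat.sum_antidiagonal_eq_sum_range_succ
      (f := fun i j => PowerSeries.coeff (R := R2) i permutoEGF * PowerSeries.coeff (R := R2) j permutoEGF)]
    rw [Finset.sum_range_succ, Finset.sum_range_succ']
    rw [show m + 1 - (m+1) = 0 from by omega, coeff_permutoEGF_zero, mul_zero, add_zero,
      zero_mul, add_zero]
    have hterm : ∀ k ∈ Finset.range m,
        PowerSeries.coeff (R := R2) (k+1) permutoEGF *
          PowerSeries.coeff (R := R2) (m+1-(k+1)) permutoEGF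
        = MvPolynomial.C ((((k+1).factorial : ℚ))⁻¹ * (((m-k).factorial : ℚ))⁻¹) *
            (permutoH k * permutoH (m-1-k)) := by
      intro k hk
      rw [Finset.mem_range] at hk
      rw [coeff_permutoEGF_succ, show m+1-(k+1) = (m-1-k)+1 from by omega, coeff_permutoEGF_succ,
        show (m-1-k)+1 = m-k by omega, map_mul]
      ring
    rw [Finset.sum_congr rfl hterm]
    have hfin : ∀ k ∈ Finset.range m,
        (MvPolynomial.C (((m+1).factorial : ℚ)⁻¹) : R2) *
          (((m+1).choose (k+1)) • (permutoH k * permutoH (m-1-k)))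
        = MvPolynomial.C ((((k+1).factorial : ℚ))⁻¹ * (((m-k).factorial : ℚ))⁻¹) *
            (permutoH k * permutoH (m-1-k)) := by
      intro k hk
      rw [Finset.mem_range] at hk
      rw [nsmul_eq_mul, ← MvPolynomial.C_eq_coe_nat, ← mul_assoc, ← map_mul,
        choose_fact_id m k hk]
    rw [mul_add, Finset.mul_sum, Finset.mul_sum, zero_add]
    have hsum : ∀ k ∈ Finset.range m,
        MvPolynomial.C (((m+1).factorial : ℚ)⁻¹) *
          (MvPolynomial.X 0 * MvPolynomial.X 1 *
            (((m+1).choose (k+1)) • (permutoH k * permutoH (m-1-k))))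
        = MvPolynomial.X 0 * MvPolynomial.X 1 *
            (MvPolynomial.C ((((k+1).factorial : ℚ))⁻¹ * (((m-k).factorial : ℚ))⁻¹) *
              (permutoH k * permutoH (m-1-k))) := by
      intro k hk
      rw [← hfin k hk]
      ring
    rw [Finset.sum_congr rfl hsum]
    rw [← Finset.mul_sum]
    ring


lemma ode_zero (W c : PowerSeries R2) (h : d⁄dX R2 W = c * W)
    (h0 : PowerSeries.coeff (R := R2) 0 W = 0) : W = 0 := by
  apply PowerSeries.ext
  intro n
  induction n using Nat.strong_induction_on with
  | _ n ih =>
    cases n with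
    | zero => simpa using h0
    | succ n =>
      have hd : PowerSeries.coeff (R := R2) n (d⁄dX R2 W) =
          PowerSeries.coeff (R := R2) (n+1) W * ((n : R2)+1) := PowerSeries.coeff_derivative W n
      rw [h, PowerSeries.coeff_mul] at hd
      have hz : ∀ p ∈ Finset.HasAntidiagonal.antidiagonal n,
          PowerSeries.coeff (R := R2) p.1 c * PowerSeries.coeff (R := R2) p.2 W = 0 := by
        intro p hp
        rw [Finset.HasAntidiagonal.mem_antidiagonal] at hp
        have : PowerSeries.coeff (R := R2) p.2 W = 0 := by
          have := ih p.2 (by omega)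
          simpa using this
        rw [this, mul_zero]
      rw [Finset.sum_congr rfl hz, Finset.sum_const_zero] at hd
      have hne : ((n : R2)+1) ≠ 0 := by
        have : ((n+1 : ℕ) : R2) ≠ 0 := Nat.cast_ne_zero.mpr (Nat.succ_ne_zero n)
        push_cast at this
        exact this
      have := mul_eq_zero.mp hd.symm
      rcases this with h' | h'
      · simpa using h'
      · exact absurd h' hne

/-- `(α·e^{tx} − t·e^{αx})·H(x) = e^{αx} − e^{tx}`, i.e.
`H(x) = (e^{αx} − e^{tx})/(α·e^{tx} − t·e^{αx})`. -/
theorem permutoEGF_eq :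
    (PowerSeries.C (R := MvPolynomial (Fin 2) ℚ) (MvPolynomial.X 0) * expSeries' (MvPolynomial.X 1) -
        PowerSeries.C (R := MvPolynomial (Fin 2) ℚ) (MvPolynomial.X 1) *
          expSeries' (MvPolynomial.X 0)) * permutoEGF =
      expSeries' (MvPolynomial.X 0) - expSeries' (MvPolynomial.X 1) := by
  set A := PowerSeries.C (R := MvPolynomial (Fin 2) ℚ) (MvPolynomial.X 0) with hA
  set T := PowerSeries.C (R := MvPolynomial (Fin 2) ℚ) (MvPolynomial.X 1) with hT
  set u := expSeries' (MvPolynomial.X 0) with hu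
  set v := expSeries' (MvPolynomial.X 1) with hv
  set F := permutoEGF with hF
  set W := (A * v - T * u) * F - (u - v) with hW
  have hWzero : W = 0 := by
    apply ode_zero W (A + T + A * T * F)
    · -- derivative computation
      have du : d⁄dX R2 u = A * u := derivative_expSeries' _
      have dv : d⁄dX R2 v = T * v := derivative_expSeries' _
      have dF : d⁄dX R2 F = 1 + (A + T) * F + (A * T) * (F * F) := by
        rw [hF, derivative_permutoEGF, map_add, map_mul]
      have dA : d⁄dX R2 A = 0 := PowerSeries.derivative_C
      have dT : d⁄dX R2 T = 0 := PowerSeries.derivative_C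
      have hDprod : d⁄dX R2 ((A * v - T * u) * F) =
          (A * v - T * u) * d⁄dX R2 F + F * d⁄dX R2 (A * v - T * u) := by
        rw [Derivation.leibniz, smul_eq_mul, smul_eq_mul]
      have hDlin : d⁄dX R2 (A * v - T * u) = A * (T * v) - T * (A * u) := by
        rw [map_sub, Derivation.leibniz, Derivation.leibniz, dA, dT, du, dv,
          smul_eq_mul, smul_eq_mul, smul_eq_mul, smul_eq_mul, mul_zero, mul_zero,
          add_zero, add_zero]
      rw [hW, map_sub, map_sub, hDprod, hDlin, dF, du, dv]
      ring
    · rw [hW, map_sub, map_sub, PowerSeries.coeff_mul]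
      rw [hu, hv, coeff_expSeries'_zero, coeff_expSeries'_zero]
      have : ∀ p ∈ Finset.HasAntidiagonal.antidiagonal 0,
          PowerSeries.coeff (R := R2) p.1 (A * v - T * u) * PowerSeries.coeff (R := R2) p.2 F = 0 := by
        intro p hp
        rw [Finset.HasAntidiagonal.mem_antidiagonal] at hp
        have hp2 : p.2 = 0 := by omega
        rw [hp2, hF, coeff_permutoEGF_zero, mul_zero]
      rw [Finset.sum_congr rfl this, Finset.sum_const_zero]
      ring
  have := sub_eq_zero.mp hWzero
  rw [this]

end Aux
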